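/- Given a real number a and an integer m ≥ 1, there is a constant C = C(a, m) > 0 such that |∂_t^{m+1}[t^a e_m(tλ)]| ≤ C t^a |λ|^{m+1} e^{t Re λ} for all t > 0 and all λ ∈ ℂ with Re λ > 0. -/

import Mathlib

/-- The truncated exponential `e_m(λ) = e^λ − Σ_{j=0}^m λ^j/j!`. -/
noncomputable def ek (m : ℕ) (l : ℂ) : ℂ :=
  Complex.exp l - ∑ j ∈ Finset.range (m + 1), l ^ j / (Nat.factorial j)

lemma ek_zero (k : ℕ) : ek k 0 = 0 := by
  simp [ek, Finset.sum_range_succ']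

lemma continuous_ek (k : ℕ) : Continuous (ek k) :=
  Complex.continuous_exp.sub
    (continuous_finset_sum _ fun j _ => (continuous_pow j).div_const _)

lemma hasDerivAt_ek_succ (k : ℕ) (z : ℂ) : HasDerivAt (ek (k + 1)) (ek k z) z := by
  have h1 : HasDerivAt (fun z : ℂ => ∑ j ∈ Finset.range (k + 2), z ^ j / (Nat.factorial j))
      (∑ j ∈ Finset.range (k + 2), (j : ℂ) * z ^ (j - 1) / (Nat.factorial j)) z := by
    apply HasDerivAt.fun_sum
    intro j _
    exact (hasDerivAt_pow j z).div_const _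
  have h2 : (∑ j ∈ Finset.range (k + 2), (j : ℂ) * z ^ (j - 1) / (Nat.factorial j))
      = ∑ j ∈ Finset.range (k + 1), z ^ j / (Nat.factorial j) := by
    rw [Finset.sum_range_succ']
    simp only [Nat.cast_add, Nat.cast_one, Nat.add_sub_cancel, Nat.factorial_succ,
      Nat.cast_mul, Nat.cast_zero, zero_mul, zero_div, add_zero]
    apply Finset.sum_congr rfl
    intro j _
    have hj : ((j : ℂ) + 1) ≠ 0 := Nat.cast_add_one_ne_zero j
    have hf : ((Nat.factorial j : ℂ)) ≠ 0 := by
      exact_mod_cast Nat.cast_ne_zero.mpr (Nat.factorial_ne_zero j)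
    field_simp
  have := (Complex.hasDerivAt_exp z).sub (h2 ▸ h1)
  exact this

lemma hasDerivAt_ek_zero (z : ℂ) : HasDerivAt (ek 0) (Complex.exp z) z := by
  have h1 : HasDerivAt (fun z : ℂ => ∑ j ∈ Finset.range 1, z ^ j / (Nat.factorial j))
      (0 : ℂ) z := by
    simp only [Finset.range_one, Finset.sum_singleton, pow_zero, Nat.factorial_zero,
      Nat.cast_one, div_one]
    exact hasDerivAt_const z 1
  have h2 : ek 0 = fun z : ℂ => Complex.exp z - 1 := by
    funext w; simp [ek]
  rw [h2]
  simpa [Pi.sub_def] using (Complex.hasDerivAt_exp z).sub h1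

noncomputable def Fm (m j : ℕ) : ℂ → ℂ := if j ≤ m then ek (m - j) else Complex.exp

lemma Fm_zero (m : ℕ) : Fm m 0 = ek m := by simp [Fm]

lemma hasDerivAt_Fm (m j : ℕ) (hj : j ≤ m) (z : ℂ) :
    HasDerivAt (Fm m j) (Fm m (j + 1) z) z := by
  rcases lt_or_eq_of_le hj with h | h
  · have h1 : Fm m j = ek (m - j) := by simp [Fm, hj]
    have h2 : Fm m (j + 1) = ek (m - (j + 1)) := by simp [Fm, Nat.succ_le_of_lt h]
    rw [h1, h2]
    have : m - j = (m - (j + 1)) + 1 := by omega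
    rw [this]
    exact hasDerivAt_ek_succ _ z
  · have h1 : Fm m j = ek 0 := by simp [Fm, hj, ← h]
    have h2 : Fm m (j + 1) = Complex.exp := by simp [Fm, h]
    rw [h1, h2]
    exact hasDerivAt_ek_zero z

lemma hasDerivAt_Fm_mul (m j : ℕ) (hj : j ≤ m) (l : ℂ) (u : ℝ) :
    HasDerivAt (fun u : ℝ => Fm m j ((u : ℂ) * l)) (l * Fm m (j + 1) ((u : ℂ) * l)) u := by
  have h1 : HasDerivAt (fun z : ℂ => Fm m j (z * l)) (Fm m (j + 1) ((u : ℂ) * l) * (1 * l))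
      (u : ℂ) :=
    (hasDerivAt_Fm m j hj _).comp _ ((hasDerivAt_id (u : ℂ)).mul_const l)
  have := h1.comp_ofReal
  convert this using 1
  ring

lemma iteratedDeriv_ek_mul (m : ℕ) (l : ℂ) (j : ℕ) (hj : j ≤ m + 1) :
    iteratedDeriv j (fun u : ℝ => ek m ((u : ℂ) * l))
      = fun u : ℝ => l ^ j * Fm m j ((u : ℂ) * l) := by
  induction j with
  | zero => simp [Fm_zero]
  | succ n ih =>
    rw [iteratedDeriv_succ, ih (by omega)]
    funext u
    have h1 : HasDerivAt (fun u : ℝ => l ^ n * Fm m n ((u : ℂ) * l))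
        (l ^ (n + 1) * Fm m (n + 1) ((u : ℂ) * l)) u := by
      have := (hasDerivAt_Fm_mul m n (by omega) l u).const_mul (l ^ n)
      refine this.congr_deriv ?_
      ring
    exact h1.deriv

lemma integral_growth_bound (t : ℝ) (ht : 0 ≤ t) (l : ℂ) (f g : ℂ → ℂ) (B : ℝ)
    (hf0 : f 0 = 0)
    (hgcont : Continuous g)
    (hd : ∀ s : ℝ, HasDerivAt (fun s : ℝ => f ((s : ℂ) * l)) (l * g ((s : ℂ) * l)) s)
    (hg : ∀ s : ℝ, s ∈ Set.Ioc (0 : ℝ) t → ‖g ((s : ℂ) * l)‖ ≤ B) :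
    ‖f ((t : ℂ) * l)‖ ≤ ‖l‖ * B * t := by
  have hcont : IntervalIntegrable (fun s : ℝ => l * g ((s : ℂ) * l)) MeasureTheory.volume 0 t :=
    (continuous_const.mul (hgcont.comp (Complex.continuous_ofReal.mul continuous_const))).intervalIntegrable 0 t
  have hint := intervalIntegral.integral_eq_sub_of_hasDerivAt (fun s _ => hd s) hcont
  have h0 : f (((0 : ℝ) : ℂ) * l) = 0 := by simpa using hf0
  rw [h0, sub_zero] at hint
  have hb : ‖∫ s in (0:ℝ)..t, l * g ((s : ℂ) * l)‖ ≤ (‖l‖ * B) * |t - 0| := by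
    apply intervalIntegral.norm_integral_le_of_norm_le_const
    intro s hs
    rw [Set.uIoc_of_le ht] at hs
    have := hg s hs
    rw [norm_mul]
    exact mul_le_mul_of_nonneg_left this (norm_nonneg l)
  rw [hint] at hb
  calc ‖f ((t : ℂ) * l)‖ ≤ (‖l‖ * B) * |t - 0| := hb
    _ = ‖l‖ * B * t := by rw [sub_zero, abs_of_nonneg ht]

lemma ek_bound (k : ℕ) : ∀ (t : ℝ), 0 ≤ t → ∀ (l : ℂ), 0 ≤ l.re →
    ‖ek k ((t : ℂ) * l)‖ ≤ (t * ‖l‖) ^ (k + 1) * Real.exp (t * l.re) := by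
  induction k with
  | zero =>
    intro t ht l hl
    have h := integral_growth_bound t ht l (ek 0) Complex.exp (Real.exp (t * l.re))
      (ek_zero 0) Complex.continuous_exp
      (fun s => by simpa [Fm] using hasDerivAt_Fm_mul 0 0 le_rfl l s)
      (fun s hs => by
        rw [Complex.norm_exp]
        have hre : ((s : ℂ) * l).re = s * l.re := by simp
        rw [hre]
        exact Real.exp_le_exp.mpr (mul_le_mul_of_nonneg_right hs.2 hl))
    calc ‖ek 0 ((t : ℂ) * l)‖ ≤ ‖l‖ * Real.exp (t * l.re) * t := h
      _ = (t * ‖l‖) ^ (0 + 1) * Real.exp (t * l.re) := by ring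
  | succ n ih =>
    intro t ht l hl
    have h := integral_growth_bound t ht l (ek (n + 1)) (ek n)
      ((t * ‖l‖) ^ (n + 1) * Real.exp (t * l.re))
      (ek_zero (n + 1)) (continuous_ek n)
      (fun s => by
        have := hasDerivAt_Fm_mul (n + 1) 0 (by omega) l s
        simpa [Fm] using this)
      (fun s hs => by
        calc ‖ek n ((s : ℂ) * l)‖
            ≤ (s * ‖l‖) ^ (n + 1) * Real.exp (s * l.re) := ih s hs.1.le l hl
          _ ≤ (t * ‖l‖) ^ (n + 1) * Real.exp (t * l.re) := by
              apply mul_le_mul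
              · exact pow_le_pow_left₀ (mul_nonneg hs.1.le (norm_nonneg l))
                  (mul_le_mul_of_nonneg_right hs.2 (norm_nonneg l)) _
              · exact Real.exp_le_exp.mpr (mul_le_mul_of_nonneg_right hs.2 hl)
              · positivity
              · positivity)
    calc ‖ek (n + 1) ((t : ℂ) * l)‖
        ≤ ‖l‖ * ((t * ‖l‖) ^ (n + 1) * Real.exp (t * l.re)) * t := h
      _ = (t * ‖l‖) ^ (n + 1 + 1) * Real.exp (t * l.re) := by ring

lemma Fm_bound (m j : ℕ) (hj : j ≤ m + 1) (t : ℝ) (ht : 0 ≤ t) (l : ℂ) (hl : 0 ≤ l.re) :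
    ‖Fm m j ((t : ℂ) * l)‖
      ≤ (t * ‖l‖) ^ (m + 1 - j) * Real.exp (t * l.re) := by
  rcases le_or_gt j m with h | h
  · have h1 : Fm m j = ek (m - j) := by simp [Fm, h]
    rw [h1]
    have h2 : m + 1 - j = (m - j) + 1 := by omega
    rw [h2]
    exact ek_bound (m - j) t ht l hl
  · have hj' : j = m + 1 := by omega
    have h1 : Fm m j = Complex.exp := by simp [Fm, hj']
    rw [h1, hj', Complex.norm_exp]
    have hre : ((t : ℂ) * l).re = t * l.re := by simp
    simp [hre]

lemma iteratedDerivWithin_rpow (a : ℝ) (i : ℕ) :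
    Set.EqOn (iteratedDerivWithin i (fun u : ℝ => ((u ^ a : ℝ) : ℂ)) (Set.Ioi 0))
      (fun t : ℝ => (((∏ j ∈ Finset.range i, (a - j)) * t ^ (a - i) : ℝ) : ℂ))
      (Set.Ioi 0) := by
  induction i with
  | zero =>
    intro t ht
    simp
  | succ n ih =>
    intro t ht
    rw [iteratedDerivWithin_succ]
    rw [derivWithin_congr ih (ih ht), derivWithin_of_isOpen isOpen_Ioi ht]
    have hd : HasDerivAt
        (fun t : ℝ => ((((∏ j ∈ Finset.range n, (a - j)) * t ^ (a - n) : ℝ)) : ℂ))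
        ((((∏ j ∈ Finset.range n, (a - j)) * ((a - n) * t ^ (a - n - 1)) : ℝ)) : ℂ) t := by
      exact (((Real.hasDerivAt_rpow_const (p := a - n)
        (Or.inl (ne_of_gt (Set.mem_Ioi.mp ht)))).const_mul _).ofReal_comp)
    rw [hd.deriv]
    have h1 : (∏ j ∈ Finset.range (n + 1), (a - j)) = (∏ j ∈ Finset.range n, (a - j)) * (a - n) := Finset.prod_range_succ _ _
    have h2 : a - (n + 1 : ℕ) = a - n - 1 := by push_cast; ring
    rw [h1, h2]
    push_cast
    ring

lemma contDiff_ek (k : ℕ) {N : WithTop ℕ∞} : ContDiff ℂ N (ek k) :=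
  Complex.contDiff_exp.sub
    (ContDiff.sum fun j _ => (contDiff_id.pow j).div_const _)

theorem statement_8 (a : ℝ) (m : ℕ) (hm : 1 ≤ m) :
    ∃ C : ℝ, 0 < C ∧ ∀ (t : ℝ), 0 < t → ∀ (l : ℂ), 0 < l.re →
      ‖(iteratedDeriv (m + 1) (fun u : ℝ => ((u ^ a : ℝ) : ℂ) * ek m ((u : ℂ) * l)) t)‖
        ≤ C * t ^ a * ‖l‖ ^ (m + 1) * Real.exp (t * l.re) := by
  classical
  set c : ℕ → ℝ := fun i => ∏ j ∈ Finset.range i, (a - j) with hc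
  refine ⟨(∑ i ∈ Finset.range (m + 2), ((m + 1).choose i : ℝ) * |c i|) + 1, by positivity, ?_⟩
  intro t ht l hl
  have hts : t ∈ Set.Ioi (0 : ℝ) := ht
  set X : ℝ := t ^ a * ‖l‖ ^ (m + 1) * Real.exp (t * l.re) with hX
  have hXnn : 0 ≤ X := by positivity
  have hf : ContDiffOn ℝ ((m + 1 : ℕ) : WithTop ℕ∞) (fun u : ℝ => ((u ^ a : ℝ) : ℂ))
      (Set.Ioi 0) := by
    intro x hx
    exact (Complex.ofRealCLM.contDiff.contDiffAt.comp x
      (Real.contDiffAt_rpow_const_of_ne (ne_of_gt (Set.mem_Ioi.mp hx)))).contDiffWithinAt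
  have hg : ContDiff ℝ ((m + 1 : ℕ) : WithTop ℕ∞) (fun u : ℝ => ek m ((u : ℂ) * l)) := by
    exact ((contDiff_ek m).restrict_scalars ℝ).comp
      (Complex.ofRealCLM.contDiff.mul contDiff_const)
  have key := norm_iteratedFDerivWithin_mul_le (𝕜 := ℝ) (n := m + 1)
    hf (hg.contDiffOn) (uniqueDiffOn_Ioi 0) hts le_rfl
  have e1 : ‖iteratedDeriv (m + 1) (fun u : ℝ => ((u ^ a : ℝ) : ℂ) * ek m ((u : ℂ) * l)) t‖
      = ‖iteratedFDerivWithin ℝ (m + 1)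
          (fun u : ℝ => ((u ^ a : ℝ) : ℂ) * ek m ((u : ℂ) * l)) (Set.Ioi 0) t‖ := by
    rw [iteratedFDerivWithin_of_isOpen _ isOpen_Ioi hts,
      norm_iteratedFDeriv_eq_norm_iteratedDeriv]
  rw [e1]
  refine le_trans key ?_
  have hterm : ∀ i ∈ Finset.range (m + 2),
      ((m + 1).choose i : ℝ)
        * ‖iteratedFDerivWithin ℝ i (fun u : ℝ => ((u ^ a : ℝ) : ℂ)) (Set.Ioi 0) t‖
        * ‖iteratedFDerivWithin ℝ (m + 1 - i) (fun u : ℝ => ek m ((u : ℂ) * l))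
            (Set.Ioi 0) t‖
      ≤ ((m + 1).choose i : ℝ) * |c i| * X := by
    intro i hi
    have him : i ≤ m + 1 := by
      have := Finset.mem_range.mp hi; omega
    have ef : ‖iteratedFDerivWithin ℝ i (fun u : ℝ => ((u ^ a : ℝ) : ℂ)) (Set.Ioi 0) t‖
        = |c i| * t ^ (a - i) := by
      rw [norm_iteratedFDerivWithin_eq_norm_iteratedDerivWithin,
        iteratedDerivWithin_rpow a i hts, Complex.norm_real, Real.norm_eq_abs, abs_mul,
        abs_of_nonneg (Real.rpow_nonneg ht.le _)]
    have eg : ‖iteratedFDerivWithin ℝ (m + 1 - i) (fun u : ℝ => ek m ((u : ℂ) * l))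
          (Set.Ioi 0) t‖
        ≤ ‖l‖ ^ (m + 1 - i) * ((t * ‖l‖) ^ i * Real.exp (t * l.re)) := by
      rw [iteratedFDerivWithin_of_isOpen _ isOpen_Ioi hts,
        norm_iteratedFDeriv_eq_norm_iteratedDeriv, iteratedDeriv_ek_mul m l (m + 1 - i)
        (by omega), norm_mul, norm_pow]
      have := Fm_bound m (m + 1 - i) (by omega) t ht.le l hl.le
      have hexp : m + 1 - (m + 1 - i) = i := by omega
      rw [hexp] at this
      exact mul_le_mul_of_nonneg_left this (pow_nonneg (norm_nonneg l) _)
    rw [ef]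
    calc ((m + 1).choose i : ℝ) * (|c i| * t ^ (a - i))
          * ‖iteratedFDerivWithin ℝ (m + 1 - i) (fun u : ℝ => ek m ((u : ℂ) * l))
              (Set.Ioi 0) t‖
        ≤ ((m + 1).choose i : ℝ) * (|c i| * t ^ (a - i))
          * (‖l‖ ^ (m + 1 - i) * ((t * ‖l‖) ^ i * Real.exp (t * l.re))) := by
          apply mul_le_mul_of_nonneg_left eg
          positivity
      _ = ((m + 1).choose i : ℝ) * |c i|
          * ((t ^ (a - i) * (t : ℝ) ^ (i : ℕ))
            * (‖l‖ ^ (m + 1 - i) * ‖l‖ ^ i) * Real.exp (t * l.re)) := by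
          rw [mul_pow]; ring
      _ = ((m + 1).choose i : ℝ) * |c i| * X := by
          have hpow : t ^ (a - (i : ℝ)) * (t : ℝ) ^ (i : ℕ) = t ^ a := by
            rw [← Real.rpow_natCast t i, ← Real.rpow_add ht]
            norm_num
          have hlp : ‖l‖ ^ (m + 1 - i) * ‖l‖ ^ i
              = ‖l‖ ^ (m + 1) := by
            rw [← pow_add]; congr 1; omega
          rw [hpow, hlp, hX]
  refine le_trans (Finset.sum_le_sum hterm) ?_
  rw [← Finset.sum_mul]
  have : (∑ i ∈ Finset.range (m + 2), ((m + 1).choose i : ℝ) * |c i|) * X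
      ≤ ((∑ i ∈ Finset.range (m + 2), ((m + 1).choose i : ℝ) * |c i|) + 1) * X := by
    apply mul_le_mul_of_nonneg_right _ hXnn
    linarith
  refine le_trans this (le_of_eq ?_)
  rw [hX]; ring
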